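/- Let X₁ and X₀ be groups and d, c : X₁ → X₀, e : X₀ → X₁ group homomorphisms with d ∘ e = id and c ∘ e = id, let D = {(a,b) ∈ X₁ × X₁ : d(a) = c(b)}, and let m : D → X₁ be a group homomorphism satisfying m(a, e(d(a))) = a and m(e(c(b)), b) = b for all a, b ∈ X₁. If σ : X₁ → X₁ is any function such that d(σ(a)) = c(a) and m(σ(a), a) = e(d(a)) for all a ∈ X₁, then σ(a) = e(c(a)) · a⁻¹ · e(d(a)) for all a ∈ X₁. In particular such a function σ (the inversion of an internal groupoid) is unique. -/
import Mathlib


/-- The subgroup of composable pairs of a reflexive graph of groups: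
`D = {(a,b) ∈ X₁ × X₁ : d a = c b}`. -/
def compPairs {X₁ X₀ : Type*} [Group X₁] [Group X₀] (d c : X₁ →* X₀) :
    Subgroup (X₁ × X₁) where
  carrier := {p | d p.1 = c p.2}
  one_mem' := by simp
  mul_mem' := by
    intro a b ha hb
    simp only [Set.mem_setOf_eq, Prod.fst_mul, Prod.snd_mul, map_mul] at *
    rw [ha, hb]
  inv_mem' := by
    intro a ha
    simp only [Set.mem_setOf_eq, Prod.fst_inv, Prod.snd_inv, map_inv] at *
    rw [ha]

theorem mem_compPairs {X₁ X₀ : Type*} [Group X₁] [Group X₀] (d c : X₁ →* X₀)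
    (p : X₁ × X₁) : p ∈ compPairs d c ↔ d p.1 = c p.2 := Iff.rfl

/-- the inversion of an internal groupoid of groups is unique, given by
`σ a = e (c a) * a⁻¹ * e (d a)`. -/
theorem inversion_unique {X₁ X₀ : Type*} [Group X₁] [Group X₀]
    (d c : X₁ →* X₀) (e : X₀ →* X₁)
    (hde : ∀ x, d (e x) = x) (hce : ∀ x, c (e x) = x)
    (m : compPairs d c →* X₁)
    (hml : ∀ a : X₁, m ⟨(a, e (d a)), (mem_compPairs d c _).mpr (hce (d a)).symm⟩ = a)
    (hmr : ∀ b : X₁, m ⟨(e (c b), b), (mem_compPairs d c _).mpr (hde (c b))⟩ = b)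
    (σ : X₁ → X₁)
    (hσd : ∀ a : X₁, d (σ a) = c a)
    (hσm : ∀ a : X₁, m ⟨(σ a, a), (mem_compPairs d c _).mpr (hσd a)⟩ = e (d a)) :
    ∀ a : X₁, σ a = e (c a) * a⁻¹ * e (d a) := by
  intro a
  have hx : d ((e (c a))⁻¹ * σ a) = c (1 : X₁) := by
    simp [hde, hσd]
  have hq : (⟨(σ a, a), (mem_compPairs d c _).mpr (hσd a)⟩ : compPairs d c)
      = (⟨(e (c a), a), (mem_compPairs d c _).mpr (hde (c a))⟩ : compPairs d c)
        * ⟨((e (c a))⁻¹ * σ a, 1), (mem_compPairs d c _).mpr hx⟩ := by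
    ext <;> simp
  have hr : m ⟨((e (c a))⁻¹ * σ a, 1), (mem_compPairs d c _).mpr hx⟩
      = (e (c a))⁻¹ * σ a := by
    have h1 : e (d ((e (c a))⁻¹ * σ a)) = (1 : X₁) := by
      simp [hde, hσd]
    have := hml ((e (c a))⁻¹ * σ a)
    rw [show (⟨((e (c a))⁻¹ * σ a, e (d ((e (c a))⁻¹ * σ a))),
        (mem_compPairs d c _).mpr (hce (d ((e (c a))⁻¹ * σ a))).symm⟩ : compPairs d c)
      = ⟨((e (c a))⁻¹ * σ a, 1), (mem_compPairs d c _).mpr hx⟩ from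
        Subtype.ext (by simp [hde, hσd])] at this
    exact this
  have key := hσm a
  rw [hq, map_mul, hmr, hr] at key
  have : σ a = (e (c a)) * a⁻¹ * e (d a) := by
    rw [← key]; group
  exact this
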